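/- Conformal coverage: let Z_1,...,Z_{m+1} be exchangeable real-valued random variables and let α : ℝ^{m+1} × {1,...,m+1} → ℝ be a symmetric score, i.e., α(z, j) depends on z only through the multiset of coordinates and the value z_j. Define the p-value p = (1/(m+1))·#{j : α(Z,j) ≥ α(Z,m+1)}. Then P(p ≤ ε) ≤ ε for every ε ∈ [0,1]. -/

import Mathlib

open MeasureTheory Finset ENNReal

/-- Combinatorial key fact: at most `k` indices have rank-count `≤ k`. -/
lemma conformal_aux_card_le {n : ℕ} (v : Fin n → ℝ) (k : ℕ) :
    (univ.filter (fun j : Fin n =>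
      (univ.filter (fun i => v j ≤ v i)).card ≤ k)).card ≤ k := by
  set S := univ.filter (fun j : Fin n =>
      (univ.filter (fun i => v j ≤ v i)).card ≤ k) with hS
  rcases S.eq_empty_or_nonempty with h | h
  · simp [h]
  · obtain ⟨j₀, hj₀S, hmin⟩ := S.exists_min_image v h
    have h1 : S ⊆ univ.filter (fun i => v j₀ ≤ v i) := by
      intro j hj
      simp only [mem_filter, mem_univ, true_and]
      exact hmin j hj
    calc S.card ≤ (univ.filter (fun i => v j₀ ≤ v i)).card := card_le_card h1
      _ ≤ k := by
          have := (mem_filter.mp (hS ▸ hj₀S)).2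
          simpa using this

/-- conformal coverage: let `Z = (Z_1, ..., Z_{m+1})` be exchangeable
real-valued random variables and `α` a symmetric (permutation-equivariant) score.
With the conformal p-value `p = (1/(m+1)) #{j : α(Z, j) ≥ α(Z, m+1)}`, one has
`P(p ≤ ε) ≤ ε` for every `ε ∈ [0, 1]`. -/
theorem conformal_coverage {Ω : Type*} [MeasurableSpace Ω] (μ : Measure Ω)
    [IsProbabilityMeasure μ] (m : ℕ)
    (Z : Ω → Fin (m + 1) → ℝ) (hZ : Measurable Z)
    (hexch : ∀ σ : Equiv.Perm (Fin (m + 1)),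
      Measure.map (fun ω => Z ω ∘ σ) μ = Measure.map Z μ)
    (α : (Fin (m + 1) → ℝ) → Fin (m + 1) → ℝ)
    (hαmeas : ∀ j, Measurable fun z => α z j)
    (hαsymm : ∀ (σ : Equiv.Perm (Fin (m + 1))) (z : Fin (m + 1) → ℝ) (j : Fin (m + 1)),
      α (z ∘ σ.symm) (σ j) = α z j)
    (ε : ℝ) (hε : ε ∈ Set.Icc (0 : ℝ) 1) :
    μ {ω | ((univ.filter
        (fun j : Fin (m + 1) => α (Z ω) (Fin.last m) ≤ α (Z ω) j)).card : ℝ) / (m + 1) ≤ ε}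
      ≤ ENNReal.ofReal ε := by
  obtain ⟨hε0, hε1⟩ := hε
  set c : (Fin (m + 1) → ℝ) → Fin (m + 1) → ℕ :=
    fun z j => (univ.filter (fun i => α z j ≤ α z i)).card with hcdef
  have hεm : (0 : ℝ) ≤ ε * (m + 1) := by positivity
  set k : ℕ := ⌊ε * (m + 1)⌋₊ with hkdef
  have hkε : (k : ℝ) ≤ ε * (m + 1) := Nat.floor_le hεm
  -- measurability of counts
  have hcmeas : ∀ j, Measurable (fun z => c z j) := by
    intro j
    have : (fun z => c z j)
        = fun z => ∑ i : Fin (m + 1), if α z j ≤ α z i then 1 else 0 := by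
      funext z
      rw [hcdef]
      exact Finset.card_filter _ _
    rw [this]
    exact Finset.measurable_sum _ fun i _ =>
      Measurable.ite (measurableSet_le (hαmeas j) (hαmeas i)) measurable_const
        measurable_const
  -- the events
  set A : Fin (m + 1) → Set (Fin (m + 1) → ℝ) := fun j => {z | c z j ≤ k} with hAdef
  have hAmeas : ∀ j, MeasurableSet (A j) := fun j =>
    (hcmeas j) (measurableSet_Iic : MeasurableSet (Set.Iic k))
  -- rewrite the target set
  have hiff : ∀ (cnt : ℕ), ((cnt : ℝ) / (m + 1) ≤ ε) ↔ cnt ≤ k := by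
    intro cnt
    rw [div_le_iff₀ (by positivity : (0:ℝ) < (m:ℝ)+1), hkdef]
    exact (Nat.le_floor_iff hεm).symm
  have hset : {ω | ((univ.filter
        (fun j : Fin (m + 1) => α (Z ω) (Fin.last m) ≤ α (Z ω) j)).card : ℝ) / (m + 1) ≤ ε}
      = Z ⁻¹' (A (Fin.last m)) := by
    ext ω
    simp only [Set.mem_setOf_eq, Set.mem_preimage, hAdef, hcdef]
    exact hiff _
  rw [hset]
  -- composing with a permutation permutes the counts
  have hα_comp : ∀ (σ : Equiv.Perm (Fin (m + 1))) (z : Fin (m + 1) → ℝ) (i : Fin (m + 1)),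
      α (z ∘ σ) i = α z (σ i) := by
    intro σ z i
    simpa using hαsymm σ.symm z (σ i)
  have hc_comp : ∀ (σ : Equiv.Perm (Fin (m + 1))) (z : Fin (m + 1) → ℝ) (j : Fin (m + 1)),
      c (z ∘ σ) j = c z (σ j) := by
    intro σ z j
    simp only [hcdef, hα_comp]
    apply Finset.card_bij' (fun i _ => σ i) (fun i _ => σ.symm i) <;>
      simp [Finset.mem_filter]
  -- all events have the same probability
  have hsame : ∀ j, μ (Z ⁻¹' (A j)) = μ (Z ⁻¹' (A (Fin.last m))) := by
    intro j
    set σ : Equiv.Perm (Fin (m + 1)) := Equiv.swap (Fin.last m) j with hσ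
    have hσlast : σ (Fin.last m) = j := Equiv.swap_apply_left _ _
    have hmc : Measurable (fun ω => Z ω ∘ σ) :=
      measurable_pi_lambda _ fun i => (measurable_pi_apply (σ i)).comp hZ
    have h1 : μ ((fun ω => Z ω ∘ σ) ⁻¹' (A (Fin.last m))) = μ (Z ⁻¹' (A (Fin.last m))) := by
      rw [← Measure.map_apply hmc (hAmeas _), ← Measure.map_apply hZ (hAmeas _), hexch σ]
    have h2 : (fun ω => Z ω ∘ σ) ⁻¹' (A (Fin.last m)) = Z ⁻¹' (A j) := by
      ext ω
      simp only [Set.mem_preimage, hAdef, Set.mem_setOf_eq, hc_comp σ (Z ω) (Fin.last m),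
        hσlast]
    rw [← h1, h2]
  -- summing
  have hsum : ∑ j : Fin (m + 1), μ (Z ⁻¹' (A j)) ≤ (k : ℝ≥0∞) := by
    have heq : ∑ j : Fin (m + 1), μ (Z ⁻¹' (A j))
        = ∫⁻ ω, ∑ j : Fin (m + 1), (Z ⁻¹' (A j)).indicator (fun _ => (1 : ℝ≥0∞)) ω ∂μ := by
      rw [lintegral_finset_sum]
      · refine Finset.sum_congr rfl fun j _ => ?_
        exact (lintegral_indicator_one (hZ (hAmeas j))).symm
      · exact fun j _ => measurable_const.indicator (hZ (hAmeas j))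
    rw [heq]
    calc ∫⁻ ω, ∑ j : Fin (m + 1), (Z ⁻¹' (A j)).indicator (fun _ => (1 : ℝ≥0∞)) ω ∂μ
        ≤ ∫⁻ _, (k : ℝ≥0∞) ∂μ := by
          refine lintegral_mono fun ω => ?_
          have : ∑ j : Fin (m + 1), (Z ⁻¹' (A j)).indicator (fun _ => (1 : ℝ≥0∞)) ω
              = ((univ.filter (fun j : Fin (m + 1) => c (Z ω) j ≤ k)).card : ℝ≥0∞) := by
            rw [Finset.card_filter]
            push_cast
            refine Finset.sum_congr rfl fun j _ => ?_
            simp [Set.indicator_apply, hAdef]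
          rw [this]
          exact Nat.cast_le.mpr (conformal_aux_card_le (α (Z ω)) k)
      _ = (k : ℝ≥0∞) := by simp
  have hmul : ((m : ℝ≥0∞) + 1) * μ (Z ⁻¹' (A (Fin.last m))) ≤ (k : ℝ≥0∞) := by
    calc ((m : ℝ≥0∞) + 1) * μ (Z ⁻¹' (A (Fin.last m)))
        = ∑ _j : Fin (m + 1), μ (Z ⁻¹' (A (Fin.last m))) := by
          simp [Finset.sum_const, mul_comm]
      _ = ∑ j : Fin (m + 1), μ (Z ⁻¹' (A j)) := by
          exact Finset.sum_congr rfl fun j _ => (hsame j).symm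
      _ ≤ (k : ℝ≥0∞) := hsum
  have hkE : (k : ℝ≥0∞) ≤ ENNReal.ofReal ε * ((m : ℝ≥0∞) + 1) := by
    have : (k : ℝ≥0∞) = ENNReal.ofReal (k : ℝ) := by
      simp [ENNReal.ofReal_natCast]
    rw [this]
    calc ENNReal.ofReal (k : ℝ) ≤ ENNReal.ofReal (ε * (m + 1)) := ENNReal.ofReal_le_ofReal hkε
      _ = ENNReal.ofReal ε * ENNReal.ofReal ((m : ℝ) + 1) := by
          rw [ENNReal.ofReal_mul hε0]
      _ = ENNReal.ofReal ε * ((m : ℝ≥0∞) + 1) := by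
          congr 1
          rw [ENNReal.ofReal_add (by positivity) (by norm_num)]
          simp [ENNReal.ofReal_natCast]
  have hfin : ((m : ℝ≥0∞) + 1) ≠ 0 := by simp
  have hfin' : ((m : ℝ≥0∞) + 1) ≠ ⊤ := by
    simp [ENNReal.add_ne_top]
  have := hmul.trans hkE
  rw [mul_comm (ENNReal.ofReal ε)] at this
  exact (ENNReal.mul_le_mul_iff_right hfin hfin').mp this
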